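/- arXiv:2105.06079 — 4 statements merged into one kernel-verified Lean document; each statement's English description precedes it below -/
import Mathlib

section
/- For every pair of real numbers r₀, r₁, the inequality (r₁² − r₁r₀) · G̃_s(r₀) ≥ F_s(r₁) − F_s(r₀) holds. -/
open MeasureTheory Real Set

set_option maxHeartbeats 1000000 in
theorem key_convexity_inequality (d : ℕ) (hd : 1 ≤ d) (s : ℝ) (hs : s ∈ Set.Ioo (0:ℝ) (1/2))
    (F Gt : ℝ → ℝ)
    (hF : ∀ ρ : ℝ, F ρ = ∫ r in (0:ℝ)..ρ, (ρ - r) / (1 + r^2) ^ (((d:ℝ) + 1 + 2*s)/2))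
    (hGt : ∀ ρ : ℝ, Gt ρ = ∫ r in (0:ℝ)..1, (1 + ρ^2 * r^2) ^ (-((d:ℝ) + 1 + 2*s)/2)) :
    ∀ r₀ r₁ : ℝ, (r₁^2 - r₁ * r₀) * Gt r₀ ≥ F r₁ - F r₀ := by
  obtain ⟨hs0, hs1⟩ := hs
  intro r₀ r₁
  set α : ℝ := ((d:ℝ) + 1 + 2*s)/2 with hαdef
  have hα : 0 < α := by positivity
  set w : ℝ → ℝ := fun r => (1 + r^2) ^ (-α) with hwdef
  have hwpos : ∀ r : ℝ, (0:ℝ) < 1 + r^2 := fun r => by positivity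
  have hwcont : Continuous w := by
    apply Continuous.rpow_const (by continuity)
    intro x; left; exact (hwpos x).ne'
  have hwnn : ∀ r, 0 ≤ w r := fun r => rpow_nonneg (hwpos r).le _
  have hweven : ∀ r, w (-r) = w r := by intro r; simp [hwdef]
  set W : ℝ → ℝ := fun x => ∫ r in (0:ℝ)..x, w r with hWdef
  set V : ℝ → ℝ := fun x => ∫ r in (0:ℝ)..x, r * w r with hVdef
  have hrw_cont : Continuous fun r => r * w r := continuous_id.mul hwcont
  have hWderiv : ∀ x, HasDerivAt W (w x) x := fun x =>
    intervalIntegral.integral_hasDerivAt_right (hwcont.intervalIntegrable 0 x)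
      (hwcont.stronglyMeasurableAtFilter _ _) hwcont.continuousAt
  have hVderiv : ∀ x, HasDerivAt V (x * w x) x := fun x =>
    intervalIntegral.integral_hasDerivAt_right (hrw_cont.intervalIntegrable 0 x)
      (hrw_cont.stronglyMeasurableAtFilter _ _) hrw_cont.continuousAt
  have hWcont : Continuous W := continuous_iff_continuousAt.2 fun x => (hWderiv x).continuousAt
  -- F in terms of W and V
  have hFW : ∀ x, F x = x * W x - V x := by
    intro x
    rw [hF]
    have h1 : ∀ r : ℝ, (x - r) / (1 + r^2) ^ α = x * w r - r * w r := by
      intro r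
      rw [hwdef]
      simp only [rpow_neg (hwpos r).le]
      rw [div_eq_mul_inv]
      ring
    rw [intervalIntegral.integral_congr (g := fun r => x * w r - r * w r)
      (fun r _ => h1 r)]
    rw [intervalIntegral.integral_sub ((show Continuous fun r => x * w r from continuous_const.mul hwcont).intervalIntegrable 0 x)
      (hrw_cont.intervalIntegrable 0 x)]
    rw [intervalIntegral.integral_const_mul]
  have hFderiv : ∀ x, HasDerivAt (fun x => x * W x - V x) (W x) x := by
    intro x
    have h1 : HasDerivAt (fun y => y * W y - V y) (1 * W x + x * w x - x * w x) x :=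
      ((hasDerivAt_id x).mul (hWderiv x)).sub (hVderiv x)
    convert h1 using 1
    ring
  -- FTC
  have hFTC : ∀ a b : ℝ, (b * W b - V b) - (a * W a - V a) = ∫ y in a..b, W y := by
    intro a b
    exact (intervalIntegral.integral_eq_sub_of_hasDerivAt (fun x _ => hFderiv x)
      (hWcont.intervalIntegrable a b)).symm
  have hWmono : Monotone W := by
    intro a b hab
    have h1 : W b - W a = ∫ r in a..b, w r :=
      intervalIntegral.integral_interval_sub_left (hwcont.intervalIntegrable 0 b)
        (hwcont.intervalIntegrable 0 a)
    have h2 : 0 ≤ ∫ r in a..b, w r :=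
      intervalIntegral.integral_nonneg hab fun u _ => hwnn u
    linarith
  -- oddness / evenness
  have hWodd : ∀ x, W (-x) = - W x := by
    intro x
    have h := intervalIntegral.integral_comp_neg (a := (0:ℝ)) (b := x) w
    simp only [hweven, neg_zero] at h
    have h2 : (∫ r in (-x)..(0:ℝ), w r) = - ∫ r in (0:ℝ)..(-x), w r :=
      intervalIntegral.integral_symm _ _
    rw [hWdef]
    simp only at h h2 ⊢
    linarith
  have hVeven : ∀ x, V (-x) = V x := by
    intro x
    have h := intervalIntegral.integral_comp_neg (a := (0:ℝ)) (b := x) (fun r => r * w r)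
    simp only [hweven, neg_zero, neg_mul] at h
    rw [intervalIntegral.integral_neg] at h
    have h2 : (∫ r in (-x)..(0:ℝ), r * w r) = - ∫ r in (0:ℝ)..(-x), r * w r :=
      intervalIntegral.integral_symm _ _
    rw [h2] at h
    rw [hVdef]
    simp only at h ⊢
    linarith
  have hFabs : ∀ x : ℝ, F x = F |x| := by
    intro x
    rcases abs_cases x with ⟨h, _⟩ | ⟨h, _⟩
    · rw [h]
    · rw [h, hFW, hFW, hWodd, hVeven]; ring
  -- W x = x * Gt x
  have hWGt : ∀ x : ℝ, x * Gt x = W x := by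
    intro x
    rw [hGt]
    have h1 : ∀ r : ℝ, (1 + x^2 * r^2) ^ (-((d:ℝ) + 1 + 2*s)/2) = w (x * r) := by
      intro r
      rw [hwdef]
      simp only
      rw [neg_div]
      congr 1
      ring
    rw [intervalIntegral.integral_congr (g := fun r => w (x * r)) (fun r _ => h1 r)]
    have h2 := intervalIntegral.smul_integral_comp_mul_left (a := (0:ℝ)) (b := 1) w x
    simp only [smul_eq_mul, mul_zero, mul_one] at h2
    rw [h2, hWdef]
  have hGtnn : ∀ x : ℝ, 0 ≤ Gt x := by
    intro x
    rw [hGt]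
    apply intervalIntegral.integral_nonneg (by norm_num)
    intro u _
    positivity
  have hGtcont : ∀ x : ℝ, Continuous fun r : ℝ => (1 + x^2 * r^2) ^ (-((d:ℝ) + 1 + 2*s)/2) := by
    intro x
    apply Continuous.rpow_const (by continuity)
    intro r; left; positivity
  have hGtanti : ∀ a b : ℝ, 0 ≤ a → a ≤ b → Gt b ≤ Gt a := by
    intro a b ha hab
    rw [hGt, hGt]
    apply intervalIntegral.integral_mono_on (by norm_num)
      ((hGtcont b).intervalIntegrable 0 1) ((hGtcont a).intervalIntegrable 0 1)
    intro r _
    apply rpow_le_rpow_of_nonpos (by positivity)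
    · have h2 : a^2 ≤ b^2 := by nlinarith
      nlinarith [sq_nonneg r, mul_le_mul_of_nonneg_right h2 (sq_nonneg r)]
    · rw [neg_div]; exact neg_nonpos.mpr (by positivity)
  have hGtabs : ∀ x : ℝ, Gt x = Gt |x| := by
    intro x
    rw [hGt, hGt, sq_abs]
  -- main argument
  set a := |r₀| with hadef
  set b := |r₁| with hbdef
  have ha : 0 ≤ a := abs_nonneg _
  have hb : 0 ≤ b := abs_nonneg _
  -- Step 1 : F b - F a ≤ W b * (b - a)
  have step1 : F b - F a ≤ W b * (b - a) := by
    have hkey : F b - F a = ∫ y in a..b, W y := by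
      rw [hFW, hFW]; exact hFTC a b
    rw [hkey]
    rcases le_total a b with hab | hba
    · calc (∫ y in a..b, W y) ≤ ∫ _ in a..b, W b :=
            intervalIntegral.integral_mono_on hab (hWcont.intervalIntegrable a b)
              (intervalIntegrable_const) (fun y hy => hWmono hy.2)
        _ = (b - a) • W b := intervalIntegral.integral_const _
        _ = W b * (b - a) := by simp [smul_eq_mul]; ring
    · have h1 : (∫ y in b..a, W y) ≥ ∫ _ in b..a, W b :=
        intervalIntegral.integral_mono_on hba intervalIntegrable_const
          (hWcont.intervalIntegrable b a) (fun y hy => hWmono hy.1)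
      have h2 : (∫ y in a..b, W y) = - ∫ y in b..a, W y :=
        intervalIntegral.integral_symm _ _
      rw [intervalIntegral.integral_const] at h1
      rw [h2]
      simp only [smul_eq_mul] at h1
      nlinarith
  -- Step 2 : W b * (b - a) ≤ b * Gt a * (b - a)
  have step2 : W b * (b - a) ≤ b * Gt a * (b - a) := by
    rw [← hWGt b]
    rcases le_total a b with hab | hba
    · have h1 : Gt b ≤ Gt a := hGtanti a b ha hab
      exact mul_le_mul_of_nonneg_right (mul_le_mul_of_nonneg_left h1 hb)
        (sub_nonneg.2 hab)
    · have h1 : Gt a ≤ Gt b := hGtanti b a hb hba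
      exact mul_le_mul_of_nonpos_right (mul_le_mul_of_nonneg_left h1 hb)
        (sub_nonpos.2 hba)
  -- Step 3 : b * Gt a * (b - a) ≤ (r₁^2 - r₁ * r₀) * Gt a
  have step3 : b * Gt a * (b - a) ≤ (r₁^2 - r₁ * r₀) * Gt a := by
    have h1 : r₁ * r₀ ≤ b * a := by
      rw [hadef, hbdef, ← abs_mul]
      exact le_abs_self _
    have h2 : b ^ 2 = r₁ ^ 2 := by rw [hbdef, sq_abs]
    have h3 : 0 ≤ Gt a := hGtnn a
    nlinarith
  have hfin : F r₁ - F r₀ = F b - F a := by rw [hFabs r₁, hFabs r₀]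
  have hGr : Gt r₀ = Gt a := hGtabs r₀
  rw [ge_iff_le, hfin, hGr]
  linarith
end

section
/- Suppose u_h^{k+1}, u_h^k belong to an affine finite-dimensional subspace V_h^g of V^g and satisfy the semi-implicit gradient flow step (1/τ)⟨u_h^{k+1} − u_h^k, v⟩_{H^α(Ω)} = −a_{u_h^k}(u_h^{k+1}, v) for all v ∈ V_h^0 with τ > 0. Then I_s[u_h^{k+1}] + (1/τ)‖u_h^{k+1} − u_h^k‖²_{H^α(Ω)} ≤ I_s[u_h^k]. -/
open MeasureTheory Real Set intervalIntegral

lemma gfs_key_ineq (p : ℝ) (hp : 0 ≤ p) (F Gt : ℝ → ℝ)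
    (hF : ∀ ρ : ℝ, F ρ = ∫ r in (0:ℝ)..ρ, (ρ - r) * (1 + r^2) ^ (-p))
    (hGt : ∀ ρ : ℝ, Gt ρ = ∫ r in (0:ℝ)..1, (1 + ρ^2 * r^2) ^ (-p))
    (r0 r1 : ℝ) : F r1 - F r0 ≤ (r1^2 - r1*r0) * Gt r0 := by
  set g : ℝ → ℝ := fun r => (1 + r^2) ^ (-p) with hgdef
  have hg : Continuous g := by
    apply Continuous.rpow_const (continuous_const.add (continuous_pow 2))
    intro x; left; exact (add_pos_of_pos_of_nonneg one_pos (sq_nonneg x)).ne'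
  set A : ℝ → ℝ := fun t => ∫ r in (0:ℝ)..t, g r with hAdef
  have hAg : ∀ x : ℝ, HasDerivAt A (g x) x := fun x =>
    intervalIntegral.integral_hasDerivAt_right (hg.intervalIntegrable 0 x)
      (hg.stronglyMeasurableAtFilter _ _) hg.continuousAt
  have hAdiff : Differentiable ℝ A := fun x => (hAg x).differentiableAt
  have hAcont : Continuous A := hAdiff.continuous
  -- A t = t * Gt t
  have hrepr : ∀ t : ℝ, A t = t * Gt t := by
    intro t
    have h1 : (∫ r in (0:ℝ)..1, (1 + t^2*r^2) ^ (-p)) = ∫ r in (0:ℝ)..1, g (t*r) := by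
      apply intervalIntegral.integral_congr
      intro x _
      simp only [hgdef, mul_pow]
    rw [hGt, h1, ← smul_eq_mul, intervalIntegral.smul_integral_comp_mul_left g t]
    simp [hAdef]
  -- B and Φ
  set B : ℝ → ℝ := fun t => ∫ r in (0:ℝ)..t, r * g r with hBdef
  have hgB : Continuous fun r : ℝ => r * g r := continuous_id.mul hg
  have hBg : ∀ x : ℝ, HasDerivAt B (x * g x) x := fun x =>
    intervalIntegral.integral_hasDerivAt_right (hgB.intervalIntegrable 0 x)
      (hgB.stronglyMeasurableAtFilter _ _) hgB.continuousAt
  set Φ : ℝ → ℝ := fun t => ∫ r in (0:ℝ)..t, A r with hΦdef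
  have hΦg : ∀ x : ℝ, HasDerivAt Φ (A x) x := fun x =>
    intervalIntegral.integral_hasDerivAt_right (hAcont.intervalIntegrable 0 x)
      (hAcont.stronglyMeasurableAtFilter _ _) hAcont.continuousAt
  -- F ρ = ρ * A ρ - B ρ
  have hFrepr : ∀ ρ : ℝ, F ρ = ρ * A ρ - B ρ := by
    intro ρ
    rw [hF]
    have h1 : (∫ r in (0:ℝ)..ρ, (ρ - r) * (1 + r^2) ^ (-p))
        = ∫ r in (0:ℝ)..ρ, (ρ * g r - r * g r) := by
      apply intervalIntegral.integral_congr
      intro x _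
      simp only [hgdef]; ring
    rw [h1, intervalIntegral.integral_sub (f := fun r => ρ * g r) ((continuous_const.mul hg).intervalIntegrable 0 ρ)
      (hgB.intervalIntegrable 0 ρ), intervalIntegral.integral_const_mul]
  -- F = Φ
  have hD : ∀ x : ℝ, HasDerivAt (fun ρ => ρ * A ρ - B ρ - Φ ρ) 0 x := by
    intro x
    have h : HasDerivAt (fun ρ => ρ * A ρ - B ρ - Φ ρ) (1 * A x + x * g x - x * g x - A x) x :=
      (((hasDerivAt_id x).mul (hAg x)).sub (hBg x)).sub (hΦg x)
    convert h using 1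
    rw [one_mul]
    ring
  have hconst := is_const_of_deriv_eq_zero (𝕜 := ℝ)
    (f := fun ρ => ρ * A ρ - B ρ - Φ ρ) (fun x => (hD x).differentiableAt)
    (fun x => (hD x).deriv)
  have hFΦ : ∀ ρ : ℝ, F ρ = Φ ρ := by
    intro ρ
    have h0 : (fun ρ => ρ * A ρ - B ρ - Φ ρ) 0 = 0 := by
      simp [hAdef, hBdef, hΦdef, intervalIntegral.integral_same]
    have h1 := hconst ρ 0
    replace h0 : (0:ℝ) * A 0 - B 0 - Φ 0 = 0 := h0
    rw [hFrepr]; linarith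
  have hdiffF : F r1 - F r0 = ∫ t in r0..r1, A t := by
    rw [hFΦ, hFΦ]
    have h : (∫ t in (0:ℝ)..r0, A t) + (∫ t in r0..r1, A t) = ∫ t in (0:ℝ)..r1, A t :=
      intervalIntegral.integral_add_adjacent_intervals
        (hAcont.intervalIntegrable 0 r0) (hAcont.intervalIntegrable r0 r1)
    simp only [hΦdef]
    linarith [h]
  -- Gt facts
  have hGtnonneg : ∀ x : ℝ, 0 ≤ Gt x := by
    intro x
    rw [hGt]
    apply intervalIntegral.integral_nonneg (μ := volume) (by norm_num)
    intro u _
    positivity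
  have hGtmono : ∀ x y : ℝ, 0 ≤ x → x ≤ y → Gt y ≤ Gt x := by
    intro x y hx hxy
    rw [hGt, hGt]
    have hgc : ∀ c : ℝ, Continuous fun r : ℝ => (1 + c^2*r^2) ^ (-p) := by
      intro c
      apply Continuous.rpow_const
        (continuous_const.add ((continuous_const.mul (continuous_pow 2))))
      intro u; left
      exact (add_pos_of_pos_of_nonneg one_pos (mul_nonneg (sq_nonneg c) (sq_nonneg u))).ne'
    apply intervalIntegral.integral_mono_on (by norm_num)
    · exact (hgc y).intervalIntegrable 0 1
    · exact (hgc x).intervalIntegrable 0 1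
    · intro u _
      have hsq : x^2 ≤ y^2 := pow_le_pow_left₀ hx hxy 2
      have hsq2 : x^2 * u^2 ≤ y^2 * u^2 := mul_le_mul_of_nonneg_right hsq (sq_nonneg u)
      apply Real.rpow_le_rpow_of_nonpos (by positivity) (by linarith) (by linarith)
  have hGtabs : ∀ x : ℝ, Gt |x| = Gt x := by
    intro x; rw [hGt, hGt, sq_abs]
  -- odd function facts
  have hgeven : ∀ x : ℝ, g (-x) = g x := by
    intro x; simp [hgdef]
  have hAodd : ∀ t : ℝ, A (-t) = -A t := by
    intro t
    have h1 : (∫ x in (0:ℝ)..t, g (-x)) = ∫ x in (-t)..(-(0:ℝ)), g x :=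
      intervalIntegral.integral_comp_neg g
    have h2 : (∫ x in (0:ℝ)..t, g (-x)) = A t := by
      simp only [hAdef]
      apply intervalIntegral.integral_congr
      intro x _
      exact hgeven x
    simp only [neg_zero] at h1
    have h3 : A (-t) = -(∫ x in (-t)..(0:ℝ), g x) := by
      simp only [hAdef]
      rw [intervalIntegral.integral_symm]
    rw [h3, ← h1, h2]
  set K : ℝ := Gt r0 with hKdef
  set ψ : ℝ → ℝ := fun t => K * t - A t with hψdef
  have hψcont : Continuous ψ := (continuous_const.mul continuous_id).sub hAcont
  have hψodd : ∀ t : ℝ, ψ (-t) = -ψ t := by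
    intro t; simp only [hψdef, hAodd]; ring
  have hsym : ∀ c : ℝ, (∫ t in c..(-c), ψ t) = 0 := by
    intro c
    have h1 : (∫ x in (0:ℝ)..c, ψ (-x)) = ∫ x in (-c)..(0:ℝ), ψ x := by
      have := intervalIntegral.integral_comp_neg ψ (a := 0) (b := c)
      simpa using this
    have h2 : (∫ x in (0:ℝ)..c, ψ (-x)) = -∫ x in (0:ℝ)..c, ψ x := by
      rw [intervalIntegral.integral_congr (g := fun x => -ψ x) (fun x _ => hψodd x),
        intervalIntegral.integral_neg]
    have h3 : (∫ t in c..(-c), ψ t) = (∫ t in c..(0:ℝ), ψ t) + ∫ t in (0:ℝ)..(-c), ψ t :=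
      (intervalIntegral.integral_add_adjacent_intervals
        (hψcont.intervalIntegrable c 0) (hψcont.intervalIntegrable 0 (-c))).symm
    have h4 : (∫ t in (0:ℝ)..(-c), ψ t) = -∫ t in (-c)..(0:ℝ), ψ t :=
      intervalIntegral.integral_symm _ _
    have h5 : (∫ t in c..(0:ℝ), ψ t) = -∫ t in (0:ℝ)..c, ψ t :=
      intervalIntegral.integral_symm _ _
    rw [h3, h4, ← h1, h2, h5]
    ring
  set av : ℝ := |r0| with havdef
  set bv : ℝ := |r1| with hbvdef
  have hKa : K = Gt av := by rw [hKdef, havdef, hGtabs]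
  have hmid : 0 ≤ ∫ t in av..bv, ψ t := by
    rcases le_total av bv with hab | hba
    · apply intervalIntegral.integral_nonneg hab
      intro u hu
      have hu0 : 0 ≤ u := le_trans (abs_nonneg r0) hu.1
      have hmono := hGtmono av u (abs_nonneg r0) hu.1
      rw [← hKa] at hmono
      have hAu : A u = u * Gt u := hrepr u
      simp only [hψdef, hAu]
      nlinarith [hu0, hmono]
    · have h1 : 0 ≤ ∫ t in bv..av, (-ψ t) := by
        apply intervalIntegral.integral_nonneg hba
        intro u hu
        have hu0 : 0 ≤ u := le_trans (abs_nonneg r1) hu.1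
        have hmono := hGtmono u av hu0 hu.2
        rw [← hKa] at hmono
        have hAu : A u = u * Gt u := hrepr u
        simp only [hψdef, hAu]
        nlinarith [hu0, hmono]
      rw [intervalIntegral.integral_neg] at h1
      rw [intervalIntegral.integral_symm]
      linarith
  have hsplit : (∫ t in r0..r1, ψ t) = ∫ t in av..bv, ψ t := by
    have h01 : (∫ t in r0..av, ψ t) = 0 := by
      rcases abs_choice r0 with h | h
      · rw [havdef, h, intervalIntegral.integral_same]
      · rw [havdef, h]; exact hsym r0
    have h23 : (∫ t in bv..r1, ψ t) = 0 := by
      rcases abs_choice r1 with h | h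
      · rw [hbvdef, h, intervalIntegral.integral_same]
      · rw [hbvdef, h]
        have := hsym (-r1)
        simpa using this
    have ha1 : (∫ t in r0..r1, ψ t) = (∫ t in r0..av, ψ t) + ∫ t in av..r1, ψ t :=
      (intervalIntegral.integral_add_adjacent_intervals
        (hψcont.intervalIntegrable r0 av) (hψcont.intervalIntegrable av r1)).symm
    have ha2 : (∫ t in av..r1, ψ t) = (∫ t in av..bv, ψ t) + ∫ t in bv..r1, ψ t :=
      (intervalIntegral.integral_add_adjacent_intervals
        (hψcont.intervalIntegrable av bv) (hψcont.intervalIntegrable bv r1)).symm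
    rw [ha1, ha2, h01, h23]
    ring
  -- assemble
  have hψint : (∫ t in r0..r1, A t) = K * ((r1^2 - r0^2)/2) - ∫ t in r0..r1, ψ t := by
    have h1 : (∫ t in r0..r1, A t) = ∫ t in r0..r1, (K * t - ψ t) := by
      apply intervalIntegral.integral_congr
      intro x _
      simp only [hψdef]; ring
    have hintK : IntervalIntegrable (fun t : ℝ => K * t) volume r0 r1 :=
      (continuous_const.mul continuous_id).intervalIntegrable r0 r1
    rw [h1, intervalIntegral.integral_sub hintK (hψcont.intervalIntegrable r0 r1),
      intervalIntegral.integral_const_mul, integral_id]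
  have hψnonneg : 0 ≤ ∫ t in r0..r1, ψ t := by rw [hsplit]; exact hmid
  have hKnonneg : 0 ≤ K := hGtnonneg r0
  rw [hdiffF, hψint]
  nlinarith [sq_nonneg (r1 - r0)]

theorem gradient_flow_stability (d : ℕ) (hd : 1 ≤ d) (s : ℝ) (hs : s ∈ Set.Ioo (0:ℝ) (1/2))
    (Ω : Set (EuclideanSpace ℝ (Fin d)))
    (F Gt : ℝ → ℝ)
    (hF : ∀ ρ : ℝ, F ρ = ∫ r in (0:ℝ)..ρ, (ρ - r) / (1 + r^2) ^ (((d:ℝ) + 1 + 2*s)/2))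
    (hGt : ∀ ρ : ℝ, Gt ρ = ∫ r in (0:ℝ)..1, (1 + ρ^2 * r^2) ^ (-((d:ℝ) + 1 + 2*s)/2))
    -- QΩ = (ℝ^d × ℝ^d) \ (Ω^c × Ω^c)
    (QΩ : Set (EuclideanSpace ℝ (Fin d) × EuclideanSpace ℝ (Fin d)))
    (hQ : QΩ = {z | z.1 ∈ Ω ∨ z.2 ∈ Ω})
    -- the nonlocal energy and form
    (Is : (EuclideanSpace ℝ (Fin d) → ℝ) → ℝ)
    (hIs : ∀ u, Is u =
      ∫ z in QΩ, F ((u z.1 - u z.2) / dist z.1 z.2) * (dist z.1 z.2) ^ (1 - (d:ℝ) - 2*s))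
    (a : (EuclideanSpace ℝ (Fin d) → ℝ) → (EuclideanSpace ℝ (Fin d) → ℝ) →
      (EuclideanSpace ℝ (Fin d) → ℝ) → ℝ)
    (ha : ∀ u w v, a u w v =
      ∫ z in QΩ, Gt ((u z.1 - u z.2) / dist z.1 z.2) *
        ((w z.1 - w z.2) * (v z.1 - v z.2)) * (dist z.1 z.2) ^ (-((d:ℝ) + 1 + 2*s)))
    -- H^α inner product and discrete spaces
    (ip : (EuclideanSpace ℝ (Fin d) → ℝ) → (EuclideanSpace ℝ (Fin d) → ℝ) → ℝ)
    (V0 : Set (EuclideanSpace ℝ (Fin d) → ℝ))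
    (τ : ℝ) (hτ : 0 < τ)
    (u0 u1 : EuclideanSpace ℝ (Fin d) → ℝ)
    (hdiff : (fun x => u1 x - u0 x) ∈ V0)
    -- all integrals involved are assumed finite
    (hint0 : IntegrableOn (fun z => F ((u0 z.1 - u0 z.2) / dist z.1 z.2) *
      (dist z.1 z.2) ^ (1 - (d:ℝ) - 2*s)) QΩ)
    (hint1 : IntegrableOn (fun z => F ((u1 z.1 - u1 z.2) / dist z.1 z.2) *
      (dist z.1 z.2) ^ (1 - (d:ℝ) - 2*s)) QΩ)
    (hinta : IntegrableOn (fun z => Gt ((u0 z.1 - u0 z.2) / dist z.1 z.2) *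
      ((u1 z.1 - u1 z.2) * ((u1 z.1 - u0 z.1) - (u1 z.2 - u0 z.2))) *
      (dist z.1 z.2) ^ (-((d:ℝ) + 1 + 2*s))) QΩ)
    -- the semi-implicit gradient flow step
    (hflow : ∀ v ∈ V0, (1/τ) * ip (fun x => u1 x - u0 x) v = - a u0 u1 v) :
    Is u1 + (1/τ) * ip (fun x => u1 x - u0 x) (fun x => u1 x - u0 x) ≤ Is u0 := by
  obtain ⟨hs0, hs12⟩ := hs
  have hdpos : (1:ℝ) ≤ (d:ℝ) := by exact_mod_cast hd
  set p : ℝ := ((d:ℝ) + 1 + 2*s)/2 with hpdef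
  have hp : 0 ≤ p := by
    have : (0:ℝ) < (d:ℝ) + 1 + 2*s := by linarith
    rw [hpdef]; linarith
  have hF' : ∀ ρ : ℝ, F ρ = ∫ r in (0:ℝ)..ρ, (ρ - r) * (1 + r^2) ^ (-p) := by
    intro ρ; rw [hF]
    apply intervalIntegral.integral_congr
    intro x _
    show (ρ - x) / (1 + x^2) ^ p = (ρ - x) * (1 + x^2) ^ (-p)
    rw [Real.rpow_neg (by positivity), div_eq_mul_inv]
  have hGt' : ∀ ρ : ℝ, Gt ρ = ∫ r in (0:ℝ)..1, (1 + ρ^2 * r^2) ^ (-p) := by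
    intro ρ; rw [hGt]
    apply intervalIntegral.integral_congr
    intro x _
    show (1 + ρ^2 * x^2) ^ (-((d:ℝ) + 1 + 2*s)/2) = (1 + ρ^2 * x^2) ^ (-p)
    congr 1
    rw [hpdef]; ring
  have key := gfs_key_ineq p hp F Gt hF' hGt'
  have hF0 : F 0 = 0 := by rw [hF]; simp
  have hpt : ∀ z : EuclideanSpace ℝ (Fin d) × EuclideanSpace ℝ (Fin d),
      F ((u1 z.1 - u1 z.2) / dist z.1 z.2) * (dist z.1 z.2) ^ (1 - (d:ℝ) - 2*s)
      ≤ F ((u0 z.1 - u0 z.2) / dist z.1 z.2) * (dist z.1 z.2) ^ (1 - (d:ℝ) - 2*s)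
        + Gt ((u0 z.1 - u0 z.2) / dist z.1 z.2) *
          ((u1 z.1 - u1 z.2) * ((u1 z.1 - u0 z.1) - (u1 z.2 - u0 z.2))) *
          (dist z.1 z.2) ^ (-((d:ℝ) + 1 + 2*s)) := by
    intro z
    by_cases hz : z.1 = z.2
    · simp [hz, hF0]
    · have hδ : 0 < dist z.1 z.2 := dist_pos.mpr hz
      set δ := dist z.1 z.2 with hδdef
      set R0 := (u0 z.1 - u0 z.2) / δ with hR0
      set R1 := (u1 z.1 - u1 z.2) / δ with hR1
      have h1 : u1 z.1 - u1 z.2 = R1 * δ := by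
        rw [hR1, div_mul_cancel₀ _ hδ.ne']
      have h0 : u0 z.1 - u0 z.2 = R0 * δ := by
        rw [hR0, div_mul_cancel₀ _ hδ.ne']
      have h2 : (u1 z.1 - u0 z.1) - (u1 z.2 - u0 z.2) = (R1 - R0) * δ := by
        have h3 : (u1 z.1 - u0 z.1) - (u1 z.2 - u0 z.2)
            = (u1 z.1 - u1 z.2) - (u0 z.1 - u0 z.2) := by ring
        rw [h3, h1, h0]; ring
      have hδ2 : δ * δ * δ ^ (-((d:ℝ) + 1 + 2*s)) = δ ^ (1 - (d:ℝ) - 2*s) := by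
        have e1 : (1 - (d:ℝ) - 2*s) = 2 + (-((d:ℝ) + 1 + 2*s)) := by ring
        rw [e1, Real.rpow_add hδ]
        have e2 : δ ^ (2:ℝ) = δ * δ := by
          rw [show (2:ℝ) = ((2:ℕ):ℝ) by norm_num, Real.rpow_natCast]; ring
        rw [e2]
      have hE : 0 < δ ^ (1 - (d:ℝ) - 2*s) := Real.rpow_pos_of_pos hδ _
      have hexp : Gt R0 * ((u1 z.1 - u1 z.2) * ((u1 z.1 - u0 z.1) - (u1 z.2 - u0 z.2)))
          * δ ^ (-((d:ℝ) + 1 + 2*s))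
          = ((R1^2 - R1*R0) * Gt R0) * δ ^ (1 - (d:ℝ) - 2*s) := by
        rw [h1, h2, ← hδ2]; ring
      rw [hexp]
      have hk := key R0 R1
      nlinarith [mul_le_mul_of_nonneg_right hk hE.le]
  have hIneq : Is u1 ≤ Is u0 + a u0 u1 (fun x => u1 x - u0 x) := by
    rw [hIs u1, hIs u0, ha u0 u1 (fun x => u1 x - u0 x)]
    rw [← MeasureTheory.integral_add hint0 hinta]
    refine MeasureTheory.integral_mono hint1 (hint0.add hinta) ?_
    intro z
    exact hpt z
  have hfl := hflow _ hdiff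
  linarith [hIneq, hfl]
end

section
/- Let a_u(u, u−w) denote the form applied with weight from u, evaluated at (u, u−w). Then a_u(u, u−w) ≥ I_s[u] − I_s[w] for any u, w with finite energy agreeing outside Ω (convexity-type estimate following from the pointwise inequality (r₁²−r₀r₁)G̃_s(r₀) ≥ F_s(r₁)−F_s(r₀) applied with r₀ = difference quotient of w and r₁ = difference quotient of u). -/
open MeasureTheory Real Set

private lemma key_convexity (α : ℝ) (F Gt : ℝ → ℝ)
    (hF : ∀ ρ : ℝ, F ρ = ∫ r in (0:ℝ)..ρ, (ρ - r) / (1 + r^2) ^ α)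
    (hGt : ∀ ρ : ℝ, Gt ρ = ∫ r in (0:ℝ)..1, (1 + ρ^2 * r^2) ^ (-α))
    (ρ₀ ρ₁ : ℝ) :
    F ρ₁ - F ρ₀ ≤ (ρ₁ - ρ₀) * (ρ₁ * Gt ρ₁) := by
  set g : ℝ → ℝ := fun r => (1 + r^2) ^ (-α) with hg
  have hgc : Continuous g := by
    apply Continuous.rpow_const (by continuity)
    intro x; left; positivity
  have hg0 : ∀ r, 0 ≤ g r := fun r => Real.rpow_nonneg (by positivity) _
  have hFeq : ∀ ρ, F ρ = ∫ r in (0:ℝ)..ρ, (ρ - r) * g r := by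
    intro ρ; rw [hF]
    apply intervalIntegral.integral_congr
    intro r _
    show (ρ - r) / (1 + r^2) ^ α = (ρ - r) * (1 + r^2) ^ (-α)
    rw [Real.rpow_neg (by positivity), div_eq_mul_inv]
  have hA : ρ₁ * Gt ρ₁ = ∫ t in (0:ℝ)..ρ₁, g t := by
    rw [hGt]
    calc ρ₁ * ∫ r in (0:ℝ)..1, (1 + ρ₁^2 * r^2) ^ (-α)
        = ρ₁ • ∫ r in (0:ℝ)..1, g (ρ₁ * r) := by
          rw [smul_eq_mul]; congr 1
          apply intervalIntegral.integral_congr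
          intro r _
          show (1 + ρ₁^2 * r^2) ^ (-α) = (1 + (ρ₁*r)^2) ^ (-α)
          ring_nf
      _ = ∫ t in (ρ₁*0)..(ρ₁*1), g t := intervalIntegral.smul_integral_comp_mul_left g ρ₁
      _ = ∫ t in (0:ℝ)..ρ₁, g t := by norm_num
  have hi : ∀ p q c : ℝ, IntervalIntegrable (fun r => (c - r) * g r) volume p q :=
    fun p q c => ((continuous_const.sub continuous_id).mul hgc).intervalIntegrable p q
  have hsplit : F ρ₀ = (∫ r in (0:ℝ)..ρ₁, (ρ₀ - r) * g r) + ∫ r in ρ₁..ρ₀, (ρ₀ - r) * g r := by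
    rw [hFeq]
    exact (intervalIntegral.integral_add_adjacent_intervals (hi _ _ _) (hi _ _ _)).symm
  have h1 : (∫ r in (0:ℝ)..ρ₁, (ρ₁ - r) * g r) - ∫ r in (0:ℝ)..ρ₁, (ρ₀ - r) * g r
      = (ρ₁ - ρ₀) * ∫ r in (0:ℝ)..ρ₁, g r := by
    rw [← intervalIntegral.integral_sub (hi _ _ _) (hi _ _ _),
      ← intervalIntegral.integral_const_mul]
    apply intervalIntegral.integral_congr
    intro r _; ring
  have hsym : (∫ r in ρ₁..ρ₀, (ρ₀ - r) * g r) = -∫ r in ρ₀..ρ₁, (ρ₀ - r) * g r :=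
    intervalIntegral.integral_symm ρ₀ ρ₁
  have hsign : (∫ r in ρ₀..ρ₁, (ρ₀ - r) * g r) ≤ 0 := by
    rcases le_total ρ₀ ρ₁ with h | h
    · have heq : (∫ r in ρ₀..ρ₁, (ρ₀ - r) * g r) = -∫ r in ρ₀..ρ₁, (r - ρ₀) * g r := by
        rw [← intervalIntegral.integral_neg]
        apply intervalIntegral.integral_congr
        intro r _; ring
      have hpos := intervalIntegral.integral_nonneg (μ := volume) (f := fun r => (r - ρ₀) * g r) h
        (fun r hr => mul_nonneg (by linarith [hr.1]) (hg0 r))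
      linarith
    · rw [intervalIntegral.integral_symm]
      have hpos := intervalIntegral.integral_nonneg (μ := volume) (f := fun r => (ρ₀ - r) * g r) h
        (fun r hr => mul_nonneg (by linarith [hr.2]) (hg0 r))
      linarith
  rw [hA]
  have := hFeq ρ₁
  linarith [hFeq ρ₁]

theorem form_convexity_estimate (d : ℕ) (hd : 1 ≤ d) (s : ℝ) (hs : s ∈ Set.Ioo (0:ℝ) (1/2))
    (Ω : Set (EuclideanSpace ℝ (Fin d)))
    (F Gt : ℝ → ℝ)
    (hF : ∀ ρ : ℝ, F ρ = ∫ r in (0:ℝ)..ρ, (ρ - r) / (1 + r^2) ^ (((d:ℝ) + 1 + 2*s)/2))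
    (hGt : ∀ ρ : ℝ, Gt ρ = ∫ r in (0:ℝ)..1, (1 + ρ^2 * r^2) ^ (-((d:ℝ) + 1 + 2*s)/2))
    (QΩ : Set (EuclideanSpace ℝ (Fin d) × EuclideanSpace ℝ (Fin d)))
    (hQ : QΩ = {z | z.1 ∈ Ω ∨ z.2 ∈ Ω})
    (Is : (EuclideanSpace ℝ (Fin d) → ℝ) → ℝ)
    (hIs : ∀ u, Is u =
      ∫ z in QΩ, F ((u z.1 - u z.2) / dist z.1 z.2) * (dist z.1 z.2) ^ (1 - (d:ℝ) - 2*s))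
    (a : (EuclideanSpace ℝ (Fin d) → ℝ) → (EuclideanSpace ℝ (Fin d) → ℝ) →
      (EuclideanSpace ℝ (Fin d) → ℝ) → ℝ)
    (ha : ∀ u w v, a u w v =
      ∫ z in QΩ, Gt ((u z.1 - u z.2) / dist z.1 z.2) *
        ((w z.1 - w z.2) * (v z.1 - v z.2)) * (dist z.1 z.2) ^ (-((d:ℝ) + 1 + 2*s)))
    (u w : EuclideanSpace ℝ (Fin d) → ℝ)
    -- u and w agree outside Ω
    (hag : ∀ x, x ∉ Ω → u x = w x)
    -- finite energies and absolutely convergent integrals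
    (hintu : IntegrableOn (fun z => F ((u z.1 - u z.2) / dist z.1 z.2) *
      (dist z.1 z.2) ^ (1 - (d:ℝ) - 2*s)) QΩ)
    (hintw : IntegrableOn (fun z => F ((w z.1 - w z.2) / dist z.1 z.2) *
      (dist z.1 z.2) ^ (1 - (d:ℝ) - 2*s)) QΩ)
    (hinta : IntegrableOn (fun z => Gt ((u z.1 - u z.2) / dist z.1 z.2) *
      ((u z.1 - u z.2) * ((u z.1 - w z.1) - (u z.2 - w z.2))) *
      (dist z.1 z.2) ^ (-((d:ℝ) + 1 + 2*s))) QΩ) :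
    a u u (fun x => u x - w x) ≥ Is u - Is w := by
  obtain ⟨hs0, hs1⟩ := hs
  have hd1 : (1:ℝ) ≤ (d:ℝ) := by exact_mod_cast hd
  have hGt' : ∀ ρ : ℝ, Gt ρ = ∫ r in (0:ℝ)..1, (1 + ρ^2 * r^2) ^ (-(((d:ℝ) + 1 + 2*s)/2)) := by
    intro ρ; rw [hGt]; simp only [neg_div]
  have key := key_convexity (((d:ℝ) + 1 + 2*s)/2) F Gt hF hGt'
  have hpt : ∀ z : EuclideanSpace ℝ (Fin d) × EuclideanSpace ℝ (Fin d),
      F ((u z.1 - u z.2) / dist z.1 z.2) * (dist z.1 z.2) ^ (1 - (d:ℝ) - 2*s)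
        - F ((w z.1 - w z.2) / dist z.1 z.2) * (dist z.1 z.2) ^ (1 - (d:ℝ) - 2*s)
      ≤ Gt ((u z.1 - u z.2) / dist z.1 z.2) *
          ((u z.1 - u z.2) * ((u z.1 - w z.1) - (u z.2 - w z.2))) *
          (dist z.1 z.2) ^ (-((d:ℝ) + 1 + 2*s)) := by
    intro z
    rcases eq_or_lt_of_le (dist_nonneg : 0 ≤ dist z.1 z.2) with h0 | hpos
    · rw [← h0, Real.zero_rpow (by nlinarith), Real.zero_rpow (by nlinarith)]
      simp
    · set D := dist z.1 z.2 with hD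
      set ρ₁ := (u z.1 - u z.2) / D with hρ₁
      set ρ₀ := (w z.1 - w z.2) / D with hρ₀
      have hDne : D ≠ 0 := ne_of_gt hpos
      have e1 : u z.1 - u z.2 = ρ₁ * D := (div_mul_cancel₀ _ hDne).symm
      have e2 : w z.1 - w z.2 = ρ₀ * D := (div_mul_cancel₀ _ hDne).symm
      have e3 : (u z.1 - w z.1) - (u z.2 - w z.2) = (ρ₁ - ρ₀) * D := by
        have : (u z.1 - w z.1) - (u z.2 - w z.2) = (u z.1 - u z.2) - (w z.1 - w z.2) := by ring
        rw [this, e1, e2]; ring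
      have epow : D ^ (1 - (d:ℝ) - 2*s) = D * D * D ^ (-((d:ℝ) + 1 + 2*s)) := by
        rw [show (1 - (d:ℝ) - 2*s) = 1 + (1 + (-((d:ℝ) + 1 + 2*s))) by ring,
          Real.rpow_add hpos, Real.rpow_add hpos, Real.rpow_one]
        ring
      have hDpow : 0 ≤ D ^ (-((d:ℝ) + 1 + 2*s)) := Real.rpow_nonneg hpos.le _
      have hkey := key ρ₀ ρ₁
      have hmul := mul_le_mul_of_nonneg_right hkey
        (mul_nonneg (mul_nonneg hpos.le hpos.le) hDpow)
      rw [e1, e3, epow]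
      refine le_trans (le_of_eq (by ring)) (hmul.trans (le_of_eq (by ring)))
  rw [ge_iff_le]
  simp only [ha, hIs]
  rw [← MeasureTheory.integral_sub hintu hintw]
  exact MeasureTheory.integral_mono (hintu.sub hintw) hinta (fun z => hpt z)
end

section
/- Let v : ℝ^d → ℝ be bounded with |v| ≤ L, let Ω be a bounded domain contained in a ball of radius R₀, and let Ω_H ⊇ Ω satisfy dist(x, Ω) ≥ H for x ∉ Ω_H. Then ∫_Ω ∫_{Ω_H^c} |x−y|^{−(d+2s+1)} dy dx ≤ C(d,s)·|Ω|·H^{−1−2s}, and consequently |I_s[v] − I_s[T_H v]| ≤ C'(d,s,L,|Ω|)·H^{−1−2s}, where T_H v agrees with v on Ω_H and |T_H v| ≤ L everywhere, using that F_s(ρ) ≤ ρ²/2. -/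
open MeasureTheory Real Set

section Aux

lemma Faux (q ρ : ℝ) (hq : 0 ≤ q) :
    0 ≤ (∫ r in (0:ℝ)..ρ, (ρ - r) / (1 + r^2) ^ q) ∧
    (∫ r in (0:ℝ)..ρ, (ρ - r) / (1 + r^2) ^ q) ≤ ρ^2/2 := by
  have hcont : Continuous (fun r : ℝ => (ρ - r) / (1 + r^2) ^ q) := by
    apply (continuous_const.sub continuous_id).div
    · exact Continuous.rpow_const (by continuity) (fun x => Or.inl (by positivity))
    · intro x; positivity
  have hIf : ∀ a b : ℝ, IntervalIntegrable (fun r => (ρ - r) / (1 + r^2) ^ q) volume a b :=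
    fun a b => hcont.intervalIntegrable a b
  have hIg : ∀ a b : ℝ, IntervalIntegrable (fun r => (ρ - r)) volume a b :=
    fun a b => (continuous_const.sub continuous_id).intervalIntegrable a b
  have hval : (∫ r in (0:ℝ)..ρ, (ρ - r)) = ρ^2/2 := by
    open intervalIntegral in
    rw [intervalIntegral.integral_sub (intervalIntegrable_const) (intervalIntegral.intervalIntegrable_id)]
    simp [integral_id]
    ring
  have hD : ∀ r : ℝ, 1 ≤ (1 + r^2) ^ q := fun r =>
    Real.one_le_rpow (by nlinarith [sq_nonneg r]) hq
  have hDpos : ∀ r : ℝ, 0 < (1 + r^2) ^ q := fun r => by positivity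
  rcases le_or_gt 0 ρ with hρ | hρ
  · constructor
    · apply intervalIntegral.integral_nonneg hρ
      intro r hr
      have : 0 ≤ ρ - r := by simp at hr; linarith [hr.2]
      positivity
    · calc (∫ r in (0:ℝ)..ρ, (ρ - r) / (1 + r^2) ^ q) ≤ ∫ r in (0:ℝ)..ρ, (ρ - r) := by
            apply intervalIntegral.integral_mono_on hρ (hIf 0 ρ) (hIg 0 ρ)
            intro r hr
            rw [div_le_iff₀ (hDpos r)]
            have h1 : 0 ≤ ρ - r := by linarith [hr.2]
            nlinarith [hD r]
        _ = ρ^2/2 := hval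
  · have hsymm : (∫ r in (0:ℝ)..ρ, (ρ - r) / (1 + r^2) ^ q)
        = -(∫ r in ρ..(0:ℝ), (ρ - r) / (1 + r^2) ^ q) := by
      rw [intervalIntegral.integral_symm]
    have hvals : (∫ r in ρ..(0:ℝ), (ρ - r)) = -(ρ^2/2) := by
      rw [intervalIntegral.integral_symm, hval]
    constructor
    · rw [hsymm, neg_nonneg]
      have : (∫ r in ρ..(0:ℝ), (ρ - r) / (1 + r^2) ^ q) ≤ ∫ r in ρ..(0:ℝ), (0:ℝ) := by
        apply intervalIntegral.integral_mono_on hρ.le (hIf ρ 0)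
          (intervalIntegrable_const)
        intro r hr
        have h1 : ρ - r ≤ 0 := by linarith [hr.1]
        exact div_nonpos_of_nonpos_of_nonneg h1 (hDpos r).le
      simpa using this
    · rw [hsymm]
      have : -(ρ^2/2) ≤ ∫ r in ρ..(0:ℝ), (ρ - r) / (1 + r^2) ^ q := by
        rw [← hvals]
        apply intervalIntegral.integral_mono_on hρ.le (hIg ρ 0) (hIf ρ 0)
        intro r hr
        have h1 : ρ - r ≤ 0 := by linarith [hr.1]
        rw [le_div_iff₀ (hDpos r)]
        nlinarith [hD r]
      linarith

variable {d : ℕ}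
local notation "E" => EuclideanSpace ℝ (Fin d)



lemma factA (p H : ℝ) (hp : (d:ℝ) < p) (hH : 0 < H) :
    IntegrableOn (fun z : E => ‖z‖ ^ (-p)) {w : E | H ≤ ‖w‖} := by
  have hp0 : 0 ≤ p := le_trans (Nat.cast_nonneg d) hp.le
  have hmeas : MeasurableSet {w : E | H ≤ ‖w‖} :=
    measurableSet_le measurable_const measurable_norm
  have hint : Integrable (fun z : E => ((H+1)/H)^p * (1 + ‖z‖) ^ (-p)) volume := by
    apply Integrable.const_mul
    apply integrable_one_add_norm (μ := volume)
    rwa [finrank_euclideanSpace_fin]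
  refine Integrable.mono' hint.integrableOn ?_ ?_
  · exact (Measurable.aestronglyMeasurable (by fun_prop))
  · filter_upwards [ae_restrict_mem hmeas] with z hz
    have hz' : H ≤ ‖z‖ := hz
    have hz0 : 0 < ‖z‖ := lt_of_lt_of_le hH hz'
    have hc : 0 < (H+1)/H := by positivity
    have key : 1 + ‖z‖ ≤ ((H+1)/H) * ‖z‖ := by
      rw [div_mul_eq_mul_div, le_div_iff₀ hH]
      nlinarith
    have h1 : ((H+1)/H * ‖z‖) ^ (-p) ≤ (1 + ‖z‖) ^ (-p) :=
      Real.rpow_le_rpow_of_nonpos (by positivity) key (neg_nonpos.mpr hp0)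
    have h2 : ((H+1)/H * ‖z‖) ^ (-p) = ((H+1)/H)^(-p) * ‖z‖ ^ (-p) :=
      Real.mul_rpow hc.le (norm_nonneg z)
    rw [norm_of_nonneg (rpow_nonneg (norm_nonneg z) _)]
    calc ‖z‖ ^ (-p) = ((H+1)/H)^p * (((H+1)/H)^(-p) * ‖z‖ ^ (-p)) := by
          rw [← mul_assoc, ← Real.rpow_add hc, add_neg_cancel, Real.rpow_zero, one_mul]
      _ = ((H+1)/H)^p * (((H+1)/H) * ‖z‖) ^ (-p) := by rw [h2]
      _ ≤ ((H+1)/H)^p * (1 + ‖z‖) ^ (-p) := by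
          apply mul_le_mul_of_nonneg_left h1 (by positivity)

lemma factScale (p H : ℝ) (hH : 0 < H) :
    ∫ z in {w : E | H ≤ ‖w‖}, ‖z‖ ^ (-p) =
      H^((d:ℝ) - p) * ∫ z in {w : E | 1 ≤ ‖w‖}, ‖z‖ ^ (-p) := by
  have hmeasH : MeasurableSet {w : E | H ≤ ‖w‖} :=
    measurableSet_le measurable_const measurable_norm
  have hmeas1 : MeasurableSet {w : E | 1 ≤ ‖w‖} :=
    measurableSet_le measurable_const measurable_norm
  set g : E → ℝ := indicator {w : E | 1 ≤ ‖w‖} (fun w => ‖w‖ ^ (-p)) with hg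
  have key : ∀ z : E, indicator {w : E | H ≤ ‖w‖} (fun w => ‖w‖ ^ (-p)) z
      = H^(-p) * g (H⁻¹ • z) := by
    intro z
    have hnorm : ‖H⁻¹ • z‖ = H⁻¹ * ‖z‖ := by
      rw [norm_smul, Real.norm_eq_abs, abs_of_pos (by positivity)]
    by_cases hz : H ≤ ‖z‖
    · have h1 : (1:ℝ) ≤ ‖H⁻¹ • z‖ := by
        rw [hnorm, ← div_eq_inv_mul, le_div_iff₀ hH]; simpa using hz
      rw [indicator_of_mem (show z ∈ {w : E | H ≤ ‖w‖} from hz), hg,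
        indicator_of_mem (show H⁻¹ • z ∈ {w : E | 1 ≤ ‖w‖} from h1), hnorm,
        Real.mul_rpow (by positivity) (norm_nonneg z), ← Real.rpow_neg_one H,
        ← Real.rpow_mul hH.le, neg_mul_neg, one_mul, ← mul_assoc, ← Real.rpow_add hH,
        neg_add_cancel, Real.rpow_zero, one_mul]
    · have h1 : ¬ (1:ℝ) ≤ ‖H⁻¹ • z‖ := by
        rw [hnorm, ← div_eq_inv_mul]
        intro hcon
        exact hz (by rwa [le_div_iff₀ hH, one_mul] at hcon)
      rw [indicator_of_notMem (show z ∉ {w : E | H ≤ ‖w‖} from hz), hg,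
        indicator_of_notMem (show H⁻¹ • z ∉ {w : E | 1 ≤ ‖w‖} from h1), mul_zero]
  rw [← integral_indicator hmeasH, ← integral_indicator hmeas1]
  calc ∫ z, indicator {w : E | H ≤ ‖w‖} (fun w => ‖w‖ ^ (-p)) z
      = ∫ z, H^(-p) * g (H⁻¹ • z) := by exact integral_congr_ae (Filter.Eventually.of_forall key)
    _ = H^(-p) * ∫ z, g (H⁻¹ • z) := integral_const_mul _ _
    _ = H^(-p) * (|H ^ Module.finrank ℝ (EuclideanSpace ℝ (Fin d))| • ∫ z, g z) := by
        rw [MeasureTheory.Measure.integral_comp_inv_smul volume g H]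
    _ = H^((d:ℝ) - p) * ∫ z, g z := by
        rw [finrank_euclideanSpace_fin, smul_eq_mul, abs_of_pos (by positivity), ← mul_assoc]
        congr 1
        rw [← Real.rpow_natCast H d, ← Real.rpow_add hH]
        ring_nf




lemma factTrans (p H : ℝ) (hp : (d:ℝ) < p) (hH : 0 < H) (x : E) :
    IntegrableOn (fun y : E => dist x y ^ (-p)) {y : E | H ≤ dist x y} ∧
    (∫ y in {y : E | H ≤ dist x y}, dist x y ^ (-p))
      = ∫ z in {w : E | H ≤ ‖w‖}, ‖z‖ ^ (-p) := by
  have hmeasN : MeasurableSet {w : E | H ≤ ‖w‖} :=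
    measurableSet_le measurable_const measurable_norm
  have hmeasD : MeasurableSet {y : E | H ≤ dist x y} :=
    measurableSet_le measurable_const (measurable_const.dist measurable_id)
  set g : E → ℝ := indicator {w : E | H ≤ ‖w‖} (fun w => ‖w‖ ^ (-p)) with hgdef
  have hgint : Integrable g volume :=
    (integrable_indicator_iff hmeasN).2 (factA p H hp hH)
  have hcomp : ∀ y : E, indicator {y : E | H ≤ dist x y} (fun y => dist x y ^ (-p)) y
      = g (y - x) := by
    intro y
    have hd : dist x y = ‖y - x‖ := dist_eq_norm' x y
    by_cases hy : H ≤ dist x y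
    · rw [indicator_of_mem (show y ∈ {y : E | H ≤ dist x y} from hy), hgdef,
        indicator_of_mem (show y - x ∈ {w : E | H ≤ ‖w‖} from by simp only [mem_setOf_eq, ← hd]; exact hy), ← hd]
    · rw [indicator_of_notMem (show y ∉ {y : E | H ≤ dist x y} from hy), hgdef,
        indicator_of_notMem (show y - x ∉ {w : E | H ≤ ‖w‖} from by simp only [mem_setOf_eq, ← hd]; exact hy)]
  constructor
  · rw [← integrable_indicator_iff hmeasD]
    have : Integrable (fun y : E => g (y - x)) volume := hgint.comp_sub_right x
    exact this.congr (Filter.Eventually.of_forall fun y => (hcomp y).symm)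
  · rw [← integral_indicator hmeasD, ← integral_indicator hmeasN]
    calc (∫ y, indicator {y : E | H ≤ dist x y} (fun y => dist x y ^ (-p)) y)
        = ∫ y, g (y - x) := integral_congr_ae (Filter.Eventually.of_forall hcomp)
      _ = ∫ y, g y := integral_sub_right_eq_self g x




lemma factB (p H : ℝ) (hp : (d:ℝ) < p) (hH : 0 < H)
    (A B : Set E) (hA : MeasurableSet A) (hB : MeasurableSet B)
    (hAfin : volume A < ⊤) (hAB : ∀ x ∈ A, ∀ y ∈ B, H ≤ dist x y) :
    IntegrableOn (fun z : E × E => dist z.1 z.2 ^ (-p)) (A ×ˢ B) ∧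
    (∫ z in A ×ˢ B, dist z.1 z.2 ^ (-p)) ≤
      (volume A).toReal * ∫ z in {w : E | H ≤ ‖w‖}, ‖z‖ ^ (-p) := by
  set K : ℝ := ∫ z in {w : E | H ≤ ‖w‖}, ‖z‖ ^ (-p) with hK
  have hK0 : 0 ≤ K :=
    setIntegral_nonneg (measurableSet_le measurable_const measurable_norm)
      (fun z _ => rpow_nonneg (norm_nonneg z) _)
  set h₁ : E × E → ℝ := fun z => dist z.1 z.2 ^ (-p) with hh₁
  set f' : E × E → ℝ := indicator (A ×ˢ B) h₁ with hf'
  have hABm : MeasurableSet (A ×ˢ B) := hA.prod hB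
  have hfm : AEStronglyMeasurable f' ((volume : Measure E).prod volume) := by
    apply Measurable.aestronglyMeasurable
    apply Measurable.indicator _ hABm
    fun_prop
  -- slicewise facts
  have hslice : ∀ x : E, x ∈ A → (fun y => f' (x, y)) = indicator B (fun y => dist x y ^ (-p)) := by
    intro x hx
    funext y
    by_cases hy : y ∈ B
    · rw [hf', indicator_of_mem (mk_mem_prod hx hy), indicator_of_mem hy]
    · rw [hf', indicator_of_notMem (fun hc => hy hc.2), indicator_of_notMem hy]
  have hslice0 : ∀ x : E, x ∉ A → (fun y => f' (x, y)) = fun _ => (0:ℝ) := by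
    intro x hx
    funext y
    rw [hf', indicator_of_notMem (fun hc => hx hc.1)]
  have hsubB : ∀ x : E, x ∈ A → B ⊆ {y : E | H ≤ dist x y} := fun x hx y hy => hAB x hx y hy
  have hintB : ∀ x : E, x ∈ A → IntegrableOn (fun y : E => dist x y ^ (-p)) B := by
    intro x hx
    exact ((factTrans p H hp hH x).1).mono_set (hsubB x hx)
  have hvalB : ∀ x : E, x ∈ A → (∫ y in B, dist x y ^ (-p)) ≤ K := by
    intro x hx
    have h1 : (∫ y in B, dist x y ^ (-p)) ≤ ∫ y in {y : E | H ≤ dist x y}, dist x y ^ (-p) := by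
      apply integral_mono_measure (Measure.restrict_mono (hsubB x hx) le_rfl)
      · exact Filter.Eventually.of_forall (fun y => rpow_nonneg dist_nonneg _)
      · exact (factTrans p H hp hH x).1
    rw [hK]
    exact h1.trans_eq (factTrans p H hp hH x).2
  -- integrability of f' on the product
  have hint : Integrable f' ((volume : Measure E).prod volume) := by
    rw [integrable_prod_iff hfm]
    constructor
    · apply Filter.Eventually.of_forall
      intro x
      by_cases hx : x ∈ A
      · rw [hslice x hx]
        exact (integrable_indicator_iff hB).2 (hintB x hx)
      · rw [hslice0 x hx]
        exact integrable_zero _ _ _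
    · have hgint : Integrable (indicator A (fun _ => K) : E → ℝ) volume := by
        rw [integrable_indicator_iff hA]
        exact integrableOn_const hAfin.ne
      apply Integrable.mono' hgint (hfm.norm.integral_prod_right')
      apply Filter.Eventually.of_forall
      intro x
      by_cases hx : x ∈ A
      · have e1 : (fun y => ‖f' (x, y)‖) = indicator B (fun y => dist x y ^ (-p)) := by
          funext y
          rw [congrFun (hslice x hx) y]
          by_cases hy : y ∈ B
          · rw [indicator_of_mem hy]
            exact norm_of_nonneg (rpow_nonneg dist_nonneg _)
          · rw [indicator_of_notMem hy]
            exact norm_zero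
        rw [e1, integral_indicator hB, indicator_of_mem hx]
        have h2 : (0:ℝ) ≤ ∫ y in B, dist x y ^ (-p) :=
          setIntegral_nonneg hB (fun y _ => rpow_nonneg dist_nonneg _)
        rw [norm_of_nonneg h2]
        exact hvalB x hx
      · rw [indicator_of_notMem hx]
        have e1 : (fun y => ‖f' (x, y)‖) = fun _ => (0:ℝ) := by
          funext y; rw [congrFun (hslice0 x hx) y]; exact norm_zero
        rw [e1]
        simp
  have hIntOn : IntegrableOn (fun z : E × E => dist z.1 z.2 ^ (-p)) (A ×ˢ B) :=
    (integrable_indicator_iff hABm).1 hint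
  refine ⟨hIntOn, ?_⟩
  have hfub : (∫ z in A ×ˢ B, dist z.1 z.2 ^ (-p)) = ∫ x in A, ∫ y in B, dist x y ^ (-p) :=
    setIntegral_prod (fun z : E × E => dist z.1 z.2 ^ (-p)) hIntOn
  rw [hfub]
  have := norm_setIntegral_le_of_norm_le_const (μ := volume) (s := A) hAfin
    (C := K) (f := fun x => ∫ y in B, dist x y ^ (-p)) ?_
  · calc (∫ x in A, ∫ y in B, dist x y ^ (-p))
        ≤ ‖∫ x in A, ∫ y in B, dist x y ^ (-p)‖ := le_abs_self _
      _ ≤ K * (volume A).toReal := this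
      _ = (volume A).toReal * K := mul_comm _ _
  · intro x hx
    have h2 : (0:ℝ) ≤ ∫ y in B, dist x y ^ (-p) :=
      setIntegral_nonneg hB (fun y _ => rpow_nonneg dist_nonneg _)
    rw [norm_of_nonneg h2]
    exact hvalB x hx



lemma swapFact (p : ℝ) (A B : Set E) (hA : MeasurableSet A) (hB : MeasurableSet B)
    (h : IntegrableOn (fun z : E × E => dist z.1 z.2 ^ (-p)) (A ×ˢ B)) :
    IntegrableOn (fun z : E × E => dist z.1 z.2 ^ (-p)) (B ×ˢ A) ∧
    (∫ z in B ×ˢ A, dist z.1 z.2 ^ (-p)) = ∫ z in A ×ˢ B, dist z.1 z.2 ^ (-p) := by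
  set h₁ : E × E → ℝ := fun z => dist z.1 z.2 ^ (-p) with hh₁
  set f : E × E → ℝ := indicator (A ×ˢ B) h₁ with hf
  have hcomp : (f ∘ Prod.swap) = indicator (B ×ˢ A) h₁ := by
    funext z
    rcases z with ⟨x, y⟩
    by_cases hz : (x, y) ∈ B ×ˢ A
    · have hz' : ((x,y) : E × E).swap ∈ A ×ˢ B := ⟨hz.2, hz.1⟩
      simp only [Function.comp_apply, hf, indicator_of_mem hz', indicator_of_mem hz]
      simp [hh₁, dist_comm]
    · have hz' : ((x,y) : E × E).swap ∉ A ×ˢ B := fun hc => hz ⟨hc.2, hc.1⟩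
      simp only [Function.comp_apply, hf, indicator_of_notMem hz', indicator_of_notMem hz]
  have hfint : Integrable f (volume : Measure (E × E)) :=
    (integrable_indicator_iff (hA.prod hB)).2 h
  have hmp : MeasurePreserving (Prod.swap : E × E → E × E)
      ((volume : Measure E).prod volume) ((volume : Measure E).prod volume) :=
    Measure.measurePreserving_swap
  have hfm : AEStronglyMeasurable f ((volume : Measure E).prod volume) := hfint.1
  constructor
  · rw [← integrable_indicator_iff (hB.prod hA), ← hcomp]
    exact (hmp.integrable_comp hfm).2 hfint
  · rw [← integral_indicator (hB.prod hA), ← integral_indicator (hA.prod hB), ← hcomp]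
    have := hmp.integral_comp (MeasurableEquiv.prodComm (α := E) (β := E)).measurableEmbedding f
    exact this

end Aux
set_option maxHeartbeats 1000000 in
theorem truncation_energy_estimate (d : ℕ) (hd : 1 ≤ d) (s : ℝ) (hs : s ∈ Set.Ioo (0:ℝ) (1/2))
    (Ω : Set (EuclideanSpace ℝ (Fin d))) (hΩmeas : MeasurableSet Ω)
    (R₀ : ℝ) (hR₀ : 0 < R₀) (hΩbdd : Ω ⊆ Metric.ball (0 : EuclideanSpace ℝ (Fin d)) R₀)
    (L : ℝ) (hL : 0 < L)
    (v : EuclideanSpace ℝ (Fin d) → ℝ) (hv : ∀ x, |v x| ≤ L)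
    (QΩ : Set (EuclideanSpace ℝ (Fin d) × EuclideanSpace ℝ (Fin d)))
    (hQ : QΩ = {z | z.1 ∈ Ω ∨ z.2 ∈ Ω})
    (F : ℝ → ℝ)
    (hF : ∀ ρ : ℝ, F ρ = ∫ r in (0:ℝ)..ρ, (ρ - r) / (1 + r^2) ^ (((d:ℝ) + 1 + 2*s)/2))
    (Is : (EuclideanSpace ℝ (Fin d) → ℝ) → ℝ)
    (hIs : ∀ u, Is u =
      ∫ z in QΩ, F ((u z.1 - u z.2) / dist z.1 z.2) * (dist z.1 z.2) ^ (1 - (d:ℝ) - 2*s)) :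
    ∃ C C' : ℝ, 0 < C ∧ 0 < C' ∧
      ∀ H : ℝ, 0 < H →
      ∀ ΩH : Set (EuclideanSpace ℝ (Fin d)), Ω ⊆ ΩH →
        (∀ x, x ∉ ΩH → H ≤ Metric.infDist x Ω) →
      ∀ TH : EuclideanSpace ℝ (Fin d) → ℝ,
        (∀ x ∈ ΩH, TH x = v x) → (∀ x, |TH x| ≤ L) →
        IntegrableOn (fun z => F ((v z.1 - v z.2) / dist z.1 z.2) *
          (dist z.1 z.2) ^ (1 - (d:ℝ) - 2*s)) QΩ →
        IntegrableOn (fun z => F ((TH z.1 - TH z.2) / dist z.1 z.2) *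
          (dist z.1 z.2) ^ (1 - (d:ℝ) - 2*s)) QΩ →
        (∫ x in Ω, ∫ y in ΩHᶜ, (dist x y) ^ (-((d:ℝ) + 2*s + 1)) ≤
            C * (volume Ω).toReal * H ^ (-1 - 2*s)) ∧
        |Is v - Is TH| ≤ C' * H ^ (-1 - 2*s) := by
  obtain ⟨hs0, hs12⟩ := hs
  have hd1 : (1:ℝ) ≤ (d:ℝ) := by exact_mod_cast hd
  set p : ℝ := (d:ℝ) + 2*s + 1 with hpdef
  have hp : (d:ℝ) < p := by rw [hpdef]; linarith
  have hp0 : 0 ≤ p := le_trans (Nat.cast_nonneg d) hp.le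
  set C1 : ℝ := ∫ z in {w : EuclideanSpace ℝ (Fin d) | 1 ≤ ‖w‖}, ‖z‖ ^ (-p) with hC1def
  have hC1nn : 0 ≤ C1 :=
    setIntegral_nonneg (measurableSet_le measurable_const measurable_norm)
      (fun z _ => rpow_nonneg (norm_nonneg z) _)
  have hΩfin : volume Ω < ⊤ :=
    lt_of_le_of_lt (measure_mono hΩbdd) measure_ball_lt_top
  have hvol0 : (0:ℝ) ≤ (volume Ω).toReal := ENNReal.toReal_nonneg
  have hC'pos : 0 < 8*L^2*(volume Ω).toReal*(C1+1) + 1 := by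
    have h8 : 0 ≤ 8*L^2*(volume Ω).toReal*(C1+1) :=
      mul_nonneg (mul_nonneg (by positivity) hvol0) (by linarith)
    linarith
  refine ⟨C1 + 1, 8*L^2*(volume Ω).toReal*(C1+1) + 1, by linarith, hC'pos, ?_⟩
  intro H hH ΩH hΩΩH hfar TH hTHeq hTHL hIv hIT
  have hHpow : (0:ℝ) < H ^ (-1 - 2*s) := rpow_pos_of_pos hH _
  have hexp : (d:ℝ) - p = -1 - 2*s := by rw [hpdef]; ring
  have hKH : (∫ z in {w : EuclideanSpace ℝ (Fin d) | H ≤ ‖w‖}, ‖z‖ ^ (-p))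
      = H ^ (-1 - 2*s) * C1 := by
    rw [factScale p H hH, hexp, hC1def]
  -- Part 1
  have part1 : (∫ x in Ω, ∫ y in ΩHᶜ, (dist x y) ^ (-p)) ≤
      (C1 + 1) * (volume Ω).toReal * H ^ (-1 - 2*s) := by
    have hbound : ∀ x ∈ Ω, ‖∫ y in ΩHᶜ, (dist x y) ^ (-p)‖ ≤ H ^ (-1 - 2*s) * C1 := by
      intro x hx
      have hnn : (0:ℝ) ≤ ∫ y in ΩHᶜ, (dist x y) ^ (-p) :=
        integral_nonneg (fun y => rpow_nonneg dist_nonneg _)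
      rw [norm_of_nonneg hnn]
      have hsub : ΩHᶜ ⊆ {y : EuclideanSpace ℝ (Fin d) | H ≤ dist x y} := by
        intro y hy
        have h1 : H ≤ Metric.infDist y Ω := hfar y hy
        have h2 : Metric.infDist y Ω ≤ dist y x := Metric.infDist_le_dist_of_mem hx
        simp only [mem_setOf_eq]
        calc H ≤ dist y x := le_trans h1 h2
          _ = dist x y := dist_comm y x
      calc (∫ y in ΩHᶜ, (dist x y) ^ (-p))
          ≤ ∫ y in {y : EuclideanSpace ℝ (Fin d) | H ≤ dist x y}, (dist x y) ^ (-p) := by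
            apply integral_mono_measure (Measure.restrict_mono hsub le_rfl)
            · exact Filter.Eventually.of_forall (fun y => rpow_nonneg dist_nonneg _)
            · exact (factTrans p H hp hH x).1
        _ = ∫ z in {w : EuclideanSpace ℝ (Fin d) | H ≤ ‖w‖}, ‖z‖ ^ (-p) :=
            (factTrans p H hp hH x).2
        _ = H ^ (-1 - 2*s) * C1 := hKH
    have := norm_setIntegral_le_of_norm_le_const (μ := volume) (s := Ω) hΩfin hbound
    calc (∫ x in Ω, ∫ y in ΩHᶜ, (dist x y) ^ (-p))
        ≤ ‖∫ x in Ω, ∫ y in ΩHᶜ, (dist x y) ^ (-p)‖ := le_abs_self _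
      _ ≤ (H ^ (-1 - 2*s) * C1) * (volume Ω).toReal := this
      _ ≤ (C1 + 1) * (volume Ω).toReal * H ^ (-1 - 2*s) := by nlinarith
  refine ⟨part1, ?_⟩
  -- Part 2
  have hFb : ∀ ρ : ℝ, 0 ≤ F ρ ∧ F ρ ≤ ρ^2/2 := by
    intro ρ
    rw [hF ρ]
    exact Faux (((d:ℝ) + 1 + 2*s)/2) ρ (by positivity)
  have hqneg : 1 - (d:ℝ) - 2*s < 0 := by linarith
  -- pointwise bound
  have ptBound : ∀ (u : EuclideanSpace ℝ (Fin d) → ℝ), (∀ x, |u x| ≤ L) →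
      ∀ z : EuclideanSpace ℝ (Fin d) × EuclideanSpace ℝ (Fin d),
      |F ((u z.1 - u z.2) / dist z.1 z.2) * (dist z.1 z.2) ^ (1 - (d:ℝ) - 2*s)|
        ≤ 2*L^2 * (dist z.1 z.2) ^ (-p) := by
    intro u hu z
    rcases eq_or_lt_of_le (dist_nonneg : (0:ℝ) ≤ dist z.1 z.2) with hdz | hdz
    · rw [← hdz, Real.zero_rpow (ne_of_lt hqneg), Real.zero_rpow (by rw [hpdef]; intro hc; linarith [neg_eq_zero.1 hc])]
      simp
    · have ht := hdz
      set t : ℝ := dist z.1 z.2 with htdef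
      have hρabs : |(u z.1 - u z.2) / t| ≤ 2*L/t := by
        rw [abs_div, abs_of_pos ht]
        have h2L : |u z.1 - u z.2| ≤ 2*L := by
          calc |u z.1 - u z.2| ≤ |u z.1| + |u z.2| := abs_sub _ _
            _ ≤ 2*L := by linarith [hu z.1, hu z.2]
        gcongr
      have hFle : F ((u z.1 - u z.2) / t) ≤ (2*L/t)^2 / 2 := by
        refine le_trans (hFb _).2 ?_
        have h1 : ((u z.1 - u z.2) / t)^2 ≤ (2*L/t)^2 := by
          rw [← sq_abs ((u z.1 - u z.2) / t)]
          apply pow_le_pow_left₀ (abs_nonneg _) hρabs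
        linarith
      have hF0 : 0 ≤ F ((u z.1 - u z.2) / t) := (hFb _).1
      have htq : (0:ℝ) ≤ t ^ (1 - (d:ℝ) - 2*s) := rpow_nonneg ht.le _
      rw [abs_of_nonneg (mul_nonneg hF0 htq)]
      calc F ((u z.1 - u z.2) / t) * t ^ (1 - (d:ℝ) - 2*s)
          ≤ ((2*L/t)^2 / 2) * t ^ (1 - (d:ℝ) - 2*s) :=
            mul_le_mul_of_nonneg_right hFle htq
        _ = 2*L^2 * (t ^ ((-2:ℝ)) * t ^ (1 - (d:ℝ) - 2*s)) := by
            rw [Real.rpow_neg ht.le, show ((2:ℝ):ℝ) = ((2:ℕ):ℝ) by norm_num,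
              Real.rpow_natCast]
            field_simp
        _ = 2*L^2 * t ^ (-p) := by
            rw [← Real.rpow_add ht]
            congr 1
            congr 1
            rw [hpdef]; ring
  -- geometry sets
  set D : Set (EuclideanSpace ℝ (Fin d)) := {y | H ≤ Metric.infDist y Ω} with hDdef
  have hD : MeasurableSet D :=
    measurableSet_le measurable_const (Metric.continuous_infDist_pt Ω).measurable
  have hΩD : ∀ x ∈ Ω, ∀ y ∈ D, H ≤ dist x y := by
    intro x hx y hy
    calc H ≤ Metric.infDist y Ω := hy
      _ ≤ dist y x := Metric.infDist_le_dist_of_mem hx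
      _ = dist x y := dist_comm y x
  have hB1 := factB p H hp hH Ω D hΩmeas hD hΩfin hΩD
  have hB2 := swapFact p Ω D hΩmeas hD hB1.1
  set S' : Set (EuclideanSpace ℝ (Fin d) × EuclideanSpace ℝ (Fin d)) :=
    (Ω ×ˢ D) ∪ (D ×ˢ Ω) with hS'def
  have hS'm : MeasurableSet S' := (hΩmeas.prod hD).union (hD.prod hΩmeas)
  set h₄ : EuclideanSpace ℝ (Fin d) × EuclideanSpace ℝ (Fin d) → ℝ :=
    fun z => 4*L^2 * (dist z.1 z.2) ^ (-p) with hh₄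
  have hh₄nn : ∀ z, 0 ≤ h₄ z := fun z =>
    mul_nonneg (by positivity) (rpow_nonneg dist_nonneg _)
  have hIOn1 : IntegrableOn h₄ (Ω ×ˢ D) := hB1.1.const_mul (4*L^2)
  have hIOn2 : IntegrableOn h₄ (D ×ˢ Ω) := hB2.1.const_mul (4*L^2)
  have hIndInt : Integrable (indicator S' h₄) volume :=
    (integrable_indicator_iff hS'm).2 (hIOn1.union hIOn2)
  have hQm : MeasurableSet QΩ := by
    rw [hQ]
    exact (hΩmeas.preimage measurable_fst).union (hΩmeas.preimage measurable_snd)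
  -- pointwise bound on the difference over QΩ
  have hgb : ∀ z ∈ QΩ,
      |F ((v z.1 - v z.2) / dist z.1 z.2) * (dist z.1 z.2) ^ (1 - (d:ℝ) - 2*s)
        - F ((TH z.1 - TH z.2) / dist z.1 z.2) * (dist z.1 z.2) ^ (1 - (d:ℝ) - 2*s)|
        ≤ indicator S' h₄ z := by
    intro z hz
    rw [hQ] at hz
    by_cases h1 : z.1 ∈ ΩH
    · by_cases h2 : z.2 ∈ ΩH
      · rw [hTHeq z.1 h1, hTHeq z.2 h2, sub_self, abs_zero]
        exact indicator_nonneg (fun w _ => hh₄nn w) z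
      · have hz1 : z.1 ∈ Ω := by
          rcases hz with hz | hz
          · exact hz
          · exact absurd (hΩΩH hz) h2
        have hz2 : z.2 ∈ D := hfar z.2 h2
        have hmem : z ∈ S' := Or.inl (mk_mem_prod hz1 hz2)
        rw [indicator_of_mem hmem]
        calc |F ((v z.1 - v z.2) / dist z.1 z.2) * (dist z.1 z.2) ^ (1 - (d:ℝ) - 2*s)
              - F ((TH z.1 - TH z.2) / dist z.1 z.2) * (dist z.1 z.2) ^ (1 - (d:ℝ) - 2*s)|
            ≤ |F ((v z.1 - v z.2) / dist z.1 z.2) * (dist z.1 z.2) ^ (1 - (d:ℝ) - 2*s)|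
              + |F ((TH z.1 - TH z.2) / dist z.1 z.2) * (dist z.1 z.2) ^ (1 - (d:ℝ) - 2*s)| :=
              abs_sub _ _
          _ ≤ 2*L^2 * (dist z.1 z.2) ^ (-p) + 2*L^2 * (dist z.1 z.2) ^ (-p) :=
              add_le_add (ptBound v hv z) (ptBound TH hTHL z)
          _ = h₄ z := by rw [hh₄]; ring
    · have hz2 : z.2 ∈ Ω := by
        rcases hz with hz | hz
        · exact absurd (hΩΩH hz) h1
        · exact hz
      have hz1 : z.1 ∈ D := hfar z.1 h1
      have hmem : z ∈ S' := Or.inr (mk_mem_prod hz1 hz2)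
      rw [indicator_of_mem hmem]
      calc |F ((v z.1 - v z.2) / dist z.1 z.2) * (dist z.1 z.2) ^ (1 - (d:ℝ) - 2*s)
            - F ((TH z.1 - TH z.2) / dist z.1 z.2) * (dist z.1 z.2) ^ (1 - (d:ℝ) - 2*s)|
          ≤ |F ((v z.1 - v z.2) / dist z.1 z.2) * (dist z.1 z.2) ^ (1 - (d:ℝ) - 2*s)|
            + |F ((TH z.1 - TH z.2) / dist z.1 z.2) * (dist z.1 z.2) ^ (1 - (d:ℝ) - 2*s)| :=
            abs_sub _ _
        _ ≤ 2*L^2 * (dist z.1 z.2) ^ (-p) + 2*L^2 * (dist z.1 z.2) ^ (-p) :=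
            add_le_add (ptBound v hv z) (ptBound TH hTHL z)
        _ = h₄ z := by rw [hh₄]; ring
  -- main chain
  have hIsub : Is v - Is TH = ∫ z in QΩ,
      (F ((v z.1 - v z.2) / dist z.1 z.2) * (dist z.1 z.2) ^ (1 - (d:ℝ) - 2*s)
        - F ((TH z.1 - TH z.2) / dist z.1 z.2) * (dist z.1 z.2) ^ (1 - (d:ℝ) - 2*s)) := by
    rw [hIs v, hIs TH, ← integral_sub hIv hIT]
  have habs : |Is v - Is TH| ≤ ∫ z in QΩ,
      |F ((v z.1 - v z.2) / dist z.1 z.2) * (dist z.1 z.2) ^ (1 - (d:ℝ) - 2*s)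
        - F ((TH z.1 - TH z.2) / dist z.1 z.2) * (dist z.1 z.2) ^ (1 - (d:ℝ) - 2*s)| := by
    rw [hIsub]
    have := norm_integral_le_integral_norm (μ := volume.restrict QΩ)
      (f := fun z => F ((v z.1 - v z.2) / dist z.1 z.2) * (dist z.1 z.2) ^ (1 - (d:ℝ) - 2*s)
        - F ((TH z.1 - TH z.2) / dist z.1 z.2) * (dist z.1 z.2) ^ (1 - (d:ℝ) - 2*s))
    simpa [Real.norm_eq_abs] using this
  have hstep2 : (∫ z in QΩ,
      |F ((v z.1 - v z.2) / dist z.1 z.2) * (dist z.1 z.2) ^ (1 - (d:ℝ) - 2*s)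
        - F ((TH z.1 - TH z.2) / dist z.1 z.2) * (dist z.1 z.2) ^ (1 - (d:ℝ) - 2*s)|)
      ≤ ∫ z in QΩ, indicator S' h₄ z :=
    setIntegral_mono_on (hIv.sub hIT).abs hIndInt.integrableOn hQm hgb
  have hstep3 : (∫ z in QΩ, indicator S' h₄ z) ≤ ∫ z, indicator S' h₄ z :=
    setIntegral_le_integral hIndInt
      (Filter.Eventually.of_forall (fun z => indicator_nonneg (fun w _ => hh₄nn w) z))
  have hstep4 : (∫ z, indicator S' h₄ z) = ∫ z in S', h₄ z := integral_indicator hS'm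
  have hstep5 : (∫ z in S', h₄ z) ≤ (∫ z in Ω ×ˢ D, h₄ z) + ∫ z in D ×ˢ Ω, h₄ z := by
    have hle := Measure.restrict_union_le (μ := volume) (Ω ×ˢ D) (D ×ˢ Ω)
    have hint2 : Integrable h₄ (volume.restrict (Ω ×ˢ D) + volume.restrict (D ×ˢ Ω)) :=
      Integrable.add_measure (μ := volume.restrict (Ω ×ˢ D)) (ν := volume.restrict (D ×ˢ Ω)) hIOn1 hIOn2
    calc (∫ z in S', h₄ z) ≤ ∫ z, h₄ z ∂(volume.restrict (Ω ×ˢ D) + volume.restrict (D ×ˢ Ω)) := by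
          apply integral_mono_measure hle
            (Filter.Eventually.of_forall (fun z => hh₄nn z)) hint2
      _ = (∫ z in Ω ×ˢ D, h₄ z) + ∫ z in D ×ˢ Ω, h₄ z := integral_add_measure hIOn1 hIOn2
  have hval1 : (∫ z in Ω ×ˢ D, h₄ z) ≤ 4*L^2 * ((volume Ω).toReal * (H ^ (-1 - 2*s) * C1)) := by
    have : (∫ z in Ω ×ˢ D, h₄ z)
        = 4*L^2 * ∫ z in Ω ×ˢ D, (dist z.1 z.2) ^ (-p) := integral_const_mul _ _
    rw [this]
    apply mul_le_mul_of_nonneg_left _ (by positivity)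
    calc (∫ z in Ω ×ˢ D, (dist z.1 z.2) ^ (-p))
        ≤ (volume Ω).toReal * ∫ z in {w : EuclideanSpace ℝ (Fin d) | H ≤ ‖w‖}, ‖z‖ ^ (-p) := hB1.2
      _ = (volume Ω).toReal * (H ^ (-1 - 2*s) * C1) := by rw [hKH]
  have hval2 : (∫ z in D ×ˢ Ω, h₄ z) ≤ 4*L^2 * ((volume Ω).toReal * (H ^ (-1 - 2*s) * C1)) := by
    have heq : (∫ z in D ×ˢ Ω, h₄ z) = ∫ z in Ω ×ˢ D, h₄ z := by
      have : (∫ z in D ×ˢ Ω, (dist z.1 z.2) ^ (-p)) = ∫ z in Ω ×ˢ D, (dist z.1 z.2) ^ (-p) :=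
        hB2.2
      rw [hh₄]
      rw [show (fun z : EuclideanSpace ℝ (Fin d) × EuclideanSpace ℝ (Fin d) =>
        4*L^2 * (dist z.1 z.2) ^ (-p)) = fun z => 4*L^2 * (dist z.1 z.2) ^ (-p) from rfl]
      rw [integral_const_mul, integral_const_mul, this]
    rw [heq]
    exact hval1
  calc |Is v - Is TH| ≤ ∫ z in QΩ,
        |F ((v z.1 - v z.2) / dist z.1 z.2) * (dist z.1 z.2) ^ (1 - (d:ℝ) - 2*s)
          - F ((TH z.1 - TH z.2) / dist z.1 z.2) * (dist z.1 z.2) ^ (1 - (d:ℝ) - 2*s)| := habs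
    _ ≤ ∫ z in QΩ, indicator S' h₄ z := hstep2
    _ ≤ ∫ z, indicator S' h₄ z := hstep3
    _ = ∫ z in S', h₄ z := hstep4
    _ ≤ (∫ z in Ω ×ˢ D, h₄ z) + ∫ z in D ×ˢ Ω, h₄ z := hstep5
    _ ≤ 8*L^2 * ((volume Ω).toReal * (H ^ (-1 - 2*s) * C1)) := by linarith
    _ ≤ (8*L^2*(volume Ω).toReal*(C1+1) + 1) * H ^ (-1 - 2*s) := by nlinarith [sq_nonneg L, hHpow, hvol0, hC1nn, hL]
end
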